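/- Let 0 < q < 1, s ∈ ℝ and n ≥ 1. Then D_q H_n(x,s|q^{-1}) = {n}_q·H_{n-1}(x, s q^{-2}|q^{-1}) as polynomials in x, where D_q is the q-derivative (with parameter q, not q^{-1}). -/

import Mathlib

/-- The q-number `{n}_q = 1 + q + ⋯ + q^{n-1}`. -/
noncomputable def qNum (q : ℝ) (n : ℕ) : ℝ := ∑ k ∈ Finset.range n, q ^ k

/-- The q-factorial `{n}_q! = Π_{k=1}^n {k}_q`. -/
noncomputable def qFact (q : ℝ) (n : ℕ) : ℝ := ∏ k ∈ Finset.range n, qNum q (k + 1)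

/-- The even q-double factorial `{2k}_q!! = Π_{l=1}^k {2l}_q`. -/
noncomputable def qDoubleFact (q : ℝ) (k : ℕ) : ℝ := ∏ l ∈ Finset.range k, qNum q (2 * (l + 1))

/-- The coefficient `c_{n,k}(q) = (-1)^k q^{k(k-1)} {n}_q!/({n-2k}_q!·{2k}_q!!)`. -/
noncomputable def qHermiteCoeff (q : ℝ) (n k : ℕ) : ℝ :=
  (-1 : ℝ) ^ k * q ^ (k * (k - 1)) * qFact q n / (qFact q (n - 2 * k) * qDoubleFact q k)

/-- The `q⁻¹`-Hermite polynomial `H_n(x,s|q⁻¹) = Σ_{k=0}^{⌊n/2⌋} c_{n,k}(q⁻¹) s^k x^{n-2k}`. -/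
noncomputable def qInvHermite (q s : ℝ) (n : ℕ) : Polynomial ℝ :=
  ∑ k ∈ Finset.range (n / 2 + 1),
    Polynomial.C (qHermiteCoeff (1 / q) n k * s ^ k) * Polynomial.X ^ (n - 2 * k)

lemma qNum_zero (q : ℝ) : qNum q 0 = 0 := by simp [qNum]

lemma qNum_pos {q : ℝ} (hq : 0 < q) (m : ℕ) : 0 < qNum q (m + 1) := by
  unfold qNum
  exact Finset.sum_pos (fun i _ => pow_pos hq i) (by simp)

lemma qFact_pos {q : ℝ} (hq : 0 < q) (m : ℕ) : 0 < qFact q m :=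
  Finset.prod_pos fun i _ => qNum_pos hq i

lemma qDoubleFact_pos {q : ℝ} (hq : 0 < q) (m : ℕ) : 0 < qDoubleFact q m := by
  refine Finset.prod_pos fun i _ => ?_
  have : 2 * (i + 1) = (2 * i + 1) + 1 := by ring
  rw [this]; exact qNum_pos hq _

lemma qFact_succ (q : ℝ) (m : ℕ) : qFact q (m + 1) = qFact q m * qNum q (m + 1) :=
  Finset.prod_range_succ _ _

lemma qNum_inv {q : ℝ} (hq : q ≠ 0) (m : ℕ) :
    qNum (1 / q) (m + 1) = qNum q (m + 1) / q ^ m := by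
  rw [eq_div_iff (pow_ne_zero m hq)]
  unfold qNum
  rw [Finset.sum_mul]
  rw [← Finset.sum_range_reflect (fun k => q ^ k) (m + 1)]
  refine Finset.sum_congr rfl fun j hj => ?_
  rw [Finset.mem_range] at hj
  rw [show m + 1 - 1 - j = m - j from by omega, pow_sub₀ q hq (by omega)]
  field_simp
  rw [one_div, inv_pow, inv_mul_cancel₀ (pow_ne_zero j hq)]

lemma key {q : ℝ} (hq : 0 < q) (j k : ℕ) :
    qNum q (j + 1) * qHermiteCoeff (1 / q) (j + 2 * k + 1) k =
      qNum q (j + 2 * k + 1) * qHermiteCoeff (1 / q) (j + 2 * k) k * (q ^ (-2 : ℤ)) ^ k := by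
  have hq' : q ≠ 0 := ne_of_gt hq
  have hinv : (0:ℝ) < 1 / q := by positivity
  unfold qHermiteCoeff
  rw [show j + 2 * k + 1 - 2 * k = j + 1 from by omega,
      show j + 2 * k - 2 * k = j from by omega,
      show j + 2 * k + 1 = (j + 2 * k) + 1 from rfl,
      qFact_succ (1/q) (j + 2 * k), qFact_succ (1/q) j,
      qNum_inv hq' (j + 2 * k), qNum_inv hq' j,
      show (q ^ (-2 : ℤ)) = (q ^ 2)⁻¹ from by
        rw [zpow_neg]; norm_cast]
  have h1 : qFact (1/q) (j + 2 * k) ≠ 0 := ne_of_gt (qFact_pos hinv _)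
  have h2 : qFact (1/q) j ≠ 0 := ne_of_gt (qFact_pos hinv _)
  have h3 : qDoubleFact (1/q) k ≠ 0 := ne_of_gt (qDoubleFact_pos hinv _)
  have h4 : qNum q (j + 1) ≠ 0 := ne_of_gt (qNum_pos hq _)
  have h5 : qNum q (j + 2 * k + 1) ≠ 0 := ne_of_gt (qNum_pos hq _)
  field_simp
  ring
  rw [mul_assoc, ← mul_pow, mul_inv_cancel₀ hq', one_pow, mul_one]

/-- The q-derivative on polynomials: it sends `x^j` to `{j}_q x^{j-1}`. -/
noncomputable def qDeriv (q : ℝ) (f : Polynomial ℝ) : Polynomial ℝ :=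
  f.sum fun j a => Polynomial.C (a * qNum q j) * Polynomial.X ^ (j - 1)

lemma qDeriv_C_mul_X_pow (q c : ℝ) (m : ℕ) :
    qDeriv q (Polynomial.C c * Polynomial.X ^ m) =
      Polynomial.C (c * qNum q m) * Polynomial.X ^ (m - 1) := by
  rw [qDeriv, Polynomial.C_mul_X_pow_eq_monomial, Polynomial.sum_monomial_index]
  simp

lemma qDeriv_add (q : ℝ) (f g : Polynomial ℝ) :
    qDeriv q (f + g) = qDeriv q f + qDeriv q g := by
  unfold qDeriv
  rw [Polynomial.sum_add_index] <;> intros <;> simp [add_mul]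

lemma qDeriv_sum (q : ℝ) {ι : Type*} (t : Finset ι) (P : ι → Polynomial ℝ) :
    qDeriv q (∑ i ∈ t, P i) = ∑ i ∈ t, qDeriv q (P i) := by
  classical
  induction t using Finset.induction_on with
  | empty => simp [qDeriv]
  | insert _ _ h ih => rw [Finset.sum_insert h, Finset.sum_insert h, qDeriv_add, ih]

/-- `D_q H_n(x,s|q⁻¹) = {n}_q·H_{n-1}(x,sq⁻²|q⁻¹)`. -/
theorem qDeriv_qInvHermite (q : ℝ) (hq0 : 0 < q) (hq1 : q < 1) (s : ℝ) (n : ℕ) (hn : 1 ≤ n) :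
    qDeriv q (qInvHermite q s n) =
      Polynomial.C (qNum q n) * qInvHermite q (s * q ^ (-2 : ℤ)) (n - 1) := by
  rw [qInvHermite, qInvHermite, qDeriv_sum, Finset.mul_sum]
  simp only [qDeriv_C_mul_X_pow, ← Polynomial.C_mul, ← mul_assoc]
  have hterm : ∀ k, 2 * k ≤ n - 1 →
      Polynomial.C (qHermiteCoeff (1 / q) n k * s ^ k * qNum q (n - 2 * k)) *
          Polynomial.X ^ (n - 2 * k - 1) =
        Polynomial.C (qNum q n * qHermiteCoeff (1 / q) (n - 1) k * (s * q ^ (-2 : ℤ)) ^ k) *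
          Polynomial.X ^ (n - 1 - 2 * k) := by
    intro k hk
    obtain ⟨j, hj⟩ : ∃ j, n = j + 2 * k + 1 := ⟨n - 2 * k - 1, by omega⟩
    subst hj
    have e1 : j + 2 * k + 1 - 2 * k = j + 1 := by omega
    have e2 : j + 2 * k + 1 - 1 = j + 2 * k := by omega
    rw [e1, e2, show j + 1 - 1 = j from by omega,
      show j + 2 * k - 2 * k = j from by omega]
    have hcoeff : qHermiteCoeff (1 / q) (j + 2 * k + 1) k * s ^ k * qNum q (j + 1) =
        qNum q (j + 2 * k + 1) * qHermiteCoeff (1 / q) (j + 2 * k) k *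
          (s * q ^ (-2 : ℤ)) ^ k := by
      have hk' := key hq0 j k
      rw [mul_pow]
      linear_combination s ^ k * hk'
    rw [hcoeff]
  rcases Nat.even_or_odd n with he | ho
  · obtain ⟨t, ht⟩ := he
    have ht' : 1 ≤ t := by omega
    have h1 : n / 2 + 1 = ((n - 1) / 2 + 1) + 1 := by omega
    rw [h1, Finset.sum_range_succ]
    have hz : qNum q (n - 2 * ((n - 1) / 2 + 1)) = 0 := by
      rw [show n - 2 * ((n - 1) / 2 + 1) = 0 from by omega, qNum_zero]
    rw [hz]
    simp only [mul_zero, Polynomial.C_0, zero_mul, add_zero]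
    exact Finset.sum_congr rfl fun k hkr => hterm k (by
      rw [Finset.mem_range] at hkr; omega)
  · obtain ⟨t, ht⟩ := ho
    have h1 : n / 2 = (n - 1) / 2 := by omega
    rw [h1]
    exact Finset.sum_congr rfl fun k hkr => hterm k (by
      rw [Finset.mem_range] at hkr; omega)
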